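/- Let L := {x = [x_1,…,x_n] ∈ ℝ^{np} : x_i = x_1 for all i} be the consensus subspace, B : ℝ^p ⇉ ℝ^p maximally monotone, and define B : ℝ^{np} ⇉ ℝ^{np} by B x := [nB x_1, 0, …, 0]. Then for any β > 0 and u = [u_1,…,u_n] ∈ ℝ^{np}, the resolvent satisfies J_{β(B + ∂δ_L)} u = [û, …, û], where û := J_{βB}((1/n)∑_{i=1}^n u_i). -/

import Mathlib

open scoped InnerProductSpace

/-- The resolvent of `β(𝐁 + ∂δ_L)` on the product space, where
`𝐁 x = [nB x₁, 0, …, 0]` and `L` is the consensus subspace, is the constant vector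
`[û, …, û]` with `û = J_{βB}((1/n)∑ uᵢ)`.  The inclusion
`u ∈ x + β(𝐁 x + ∂δ_L(x))` is unfolded explicitly: `b ∈ 𝐁 x`, `s ∈ ∂δ_L(x)`
(which requires `x ∈ L`, i.e. all blocks equal, and `∑ sᵢ = 0`). -/
theorem resolvent_of_product_operator
    {p n : ℕ} [NeZero n]
    (B : EuclideanSpace ℝ (Fin p) → Set (EuclideanSpace ℝ (Fin p)))
    -- B is (maximally) monotone:
    (hBmono : ∀ x y u v, u ∈ B x → v ∈ B y → (0 : ℝ) ≤ ⟪u - v, x - y⟫_ℝ)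
    (β : ℝ) (hβ : 0 < β)
    -- J is the resolvent J_{βB} = (I + βB)⁻¹ :
    (J : EuclideanSpace ℝ (Fin p) → EuclideanSpace ℝ (Fin p))
    (hJ1 : ∀ u, β⁻¹ • (u - J u) ∈ B (J u))
    (hJ2 : ∀ u x, β⁻¹ • (u - x) ∈ B x → x = J u)
    (u : Fin n → EuclideanSpace ℝ (Fin p))
    (uhat : EuclideanSpace ℝ (Fin p))
    (huhat : uhat = J ((n : ℝ)⁻¹ • ∑ i, u i)) :
    ∀ x : Fin n → EuclideanSpace ℝ (Fin p),
      (∃ b s : Fin n → EuclideanSpace ℝ (Fin p),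
        -- b ∈ 𝐁 x :
        (∃ w ∈ B (x 0), b 0 = (n : ℝ) • w ∧ ∀ i, i ≠ 0 → b i = 0) ∧
        -- s ∈ ∂δ_L(x) :
        (∀ i, x i = x 0) ∧ (∑ i, s i = 0) ∧
        -- u = x + β (b + s) :
        (∀ i, u i = x i + β • (b i + s i)))
      ↔ x = fun _ => uhat := by
  have hn : (n : ℝ) ≠ 0 := Nat.cast_ne_zero.mpr (NeZero.ne n)
  have hβ' : β ≠ 0 := ne_of_gt hβ
  intro x
  constructor
  · rintro ⟨b, s, ⟨w, hw, hb0, hbne⟩, hxc, hs, hu⟩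
    have hsumb : ∑ i, b i = (n : ℝ) • w := by
      rw [Finset.sum_eq_single 0]
      · exact hb0
      · intro i _ hi; exact hbne i hi
      · simp
    have hsumu : ∑ i, u i = (n : ℝ) • x 0 + β • ((n : ℝ) • w) := by
      calc ∑ i, u i = ∑ i, (x i + β • (b i + s i)) := by
            exact Finset.sum_congr rfl fun i _ => hu i
        _ = (∑ i, x i) + β • ((∑ i, b i) + ∑ i, s i) := by
            rw [Finset.sum_add_distrib, ← Finset.smul_sum, Finset.sum_add_distrib]
        _ = (n : ℝ) • x 0 + β • ((n : ℝ) • w) := by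
            rw [hsumb, hs, add_zero]
            congr 1
            rw [Finset.sum_congr rfl fun i _ => hxc i, Finset.sum_const,
              Finset.card_univ, Fintype.card_fin, ← Nat.cast_smul_eq_nsmul ℝ]
    have key : β⁻¹ • ((n : ℝ)⁻¹ • ∑ i, u i - x 0) = w := by
      rw [hsumu]
      match_scalars
      all_goals try field_simp
      all_goals try ring
      all_goals linear_combination ((n : ℝ)⁻¹ * (n : ℝ)) * inv_mul_cancel₀ hβ' + inv_mul_cancel₀ hn
    have : x 0 = J ((n : ℝ)⁻¹ • ∑ i, u i) := hJ2 _ _ (by rw [key]; exact hw)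
    funext i
    rw [hxc i, this, huhat]
  · rintro rfl
    set v := (n : ℝ)⁻¹ • ∑ i, u i with hv
    have hw : β⁻¹ • (v - uhat) ∈ B uhat := by rw [huhat]; exact hJ1 v
    set w := β⁻¹ • (v - uhat) with hwdef
    refine ⟨fun i => if i = 0 then (n : ℝ) • w else 0,
      fun i => β⁻¹ • (u i - uhat) - (if i = 0 then (n : ℝ) • w else 0),
      ⟨w, hw, by simp, fun i hi => by simp [hi]⟩, fun i => rfl, ?_, ?_⟩
    · have : ∑ i : Fin n, (if i = 0 then (n : ℝ) • w else (0 : EuclideanSpace ℝ (Fin p)))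
          = (n : ℝ) • w := by
        rw [Finset.sum_eq_single 0]
        · simp
        · intro i _ hi; simp [hi]
        · simp
      rw [Finset.sum_sub_distrib, this, ← Finset.smul_sum, Finset.sum_sub_distrib,
        Finset.sum_const, Finset.card_univ, Fintype.card_fin,
        ← Nat.cast_smul_eq_nsmul ℝ, hwdef, hv]
      match_scalars
      all_goals try field_simp
      all_goals try ring
      all_goals linear_combination ((n : ℝ)⁻¹ * (n : ℝ)) * inv_mul_cancel₀ hβ' + inv_mul_cancel₀ hn
    · intro i
      have : β • (β⁻¹ • (u i - uhat)) = u i - uhat := by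
        rw [smul_smul, mul_inv_cancel₀ hβ', one_smul]
      simp only [add_sub_cancel, this]
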